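/- If there exists a rate assignment ρ on G(Φ) such that for every clause C_j the minimum delay from s_j to t_j is at most 3, then Φ is satisfiable; in fact, the truth assignment setting x_i to True exactly when ρ(u_i,v_i) = 1 satisfies every clause of Φ. -/

import Mathlib

open scoped ENNReal

/-- The nodes of the graph `G(Φ)` built from a 3-CNF formula with `n` variables and `m`
clauses: nodes `u i, v i, w i` for each variable `x i`, and `s j, t j` for each clause. -/
inductive CNode (n m : ℕ) where
  | u : Fin n → CNode n m
  | v : Fin n → CNode n m
  | w : Fin n → CNode n m
  | s : Fin m → CNode n m
  | t : Fin m → CNode n m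
  deriving DecidableEq, Fintype

/-- The edges of `G(Φ)`, where the clause `Φ j` is a set of literals `(i, b)` (`b = true`
for a positive occurrence of variable `i`, `b = false` for a negative one): edges
`(u i, v i)` and `(u i, w i)` for each variable `i`; for each clause `j` and each variable
`i` occurring in it, the edge `(s j, u i)`; the edge `(v i, t j)` if `x i` occurs positively
in clause `j`; and the edge `(w i, t j)` if `x i` occurs negatively in clause `j`. -/
def cnfEdge {n m : ℕ} (Φ : Fin m → Finset (Fin n × Bool)) :
    CNode n m → CNode n m → Prop
  | .u i, .v i' => i = i'
  | .u i, .w i' => i = i'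
  | .s j, .u i => ∃ b, (i, b) ∈ Φ j
  | .v i, .t j => (i, true) ∈ Φ j
  | .w i, .t j => (i, false) ∈ Φ j
  | _, _ => False

/-- A rate assignment on `G(Φ)`: a function `ρ` into `[0,1]`, supported on the edges of
`G(Φ)`, such that for every node the sum of `ρ` over the edges leaving that node is at
most `1`. -/
def IsRateAssignment {n m : ℕ} (Φ : Fin m → Finset (Fin n × Bool))
    (ρ : CNode n m → CNode n m → ℝ) : Prop :=
  (∀ a b, 0 ≤ ρ a b ∧ ρ a b ≤ 1) ∧
  (∀ a b, ¬ cnfEdge Φ a b → ρ a b = 0) ∧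
  (∀ a : CNode n m, ∑ b : CNode n m, ρ a b ≤ 1)

/-- The delay of an edge `(a, b)` is `1 / ρ (a, b)`, interpreted as `+∞` when
`ρ (a, b) = 0` (values in `ℝ≥0∞`). -/
noncomputable def edgeDelay {n m : ℕ} (ρ : CNode n m → CNode n m → ℝ)
    (a b : CNode n m) : ℝ≥0∞ :=
  (ENNReal.ofReal (ρ a b))⁻¹

/-- A directed path (with at least one edge) from `x` to `y`, as its list of vertices. -/
def IsDipath {V : Type*} (E : V → V → Prop) (x y : V) (p : List V) : Prop :=
  2 ≤ p.length ∧ p.head? = some x ∧ p.getLast? = some y ∧ p.Chain' E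

/-- The delay of a directed path: the sum of the delays of its edges (in `ℝ≥0∞`). -/
noncomputable def pathDelay {n m : ℕ} (ρ : CNode n m → CNode n m → ℝ)
    (p : List (CNode n m)) : ℝ≥0∞ :=
  ((p.zip p.tail).map fun q => edgeDelay ρ q.1 q.2).sum

/-- The minimum delay from `x` to `y`: the infimum of the path delays over all directed
paths from `x` to `y` (equal to `+∞` if there is none). -/
noncomputable def minDelay {n m : ℕ} (Φ : Fin m → Finset (Fin n × Bool))
    (ρ : CNode n m → CNode n m → ℝ) (x y : CNode n m) : ℝ≥0∞ :=
  sInf {d : ℝ≥0∞ | ∃ p, IsDipath (cnfEdge Φ) x y p ∧ pathDelay ρ p = d}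

lemma dipath_struct {n m : ℕ} (Φ : Fin m → Finset (Fin n × Bool)) (j : Fin m)
    (p : List (CNode n m)) (h : IsDipath (cnfEdge Φ) (.s j) (.t j) p) :
    ∃ i : Fin n, (p = [.s j, .u i, .v i, .t j] ∧ (i, true) ∈ Φ j) ∨
                 (p = [.s j, .u i, .w i, .t j] ∧ (i, false) ∈ Φ j) := by
  obtain ⟨hlen, hhead, hlast, hchain⟩ := h
  match p with
  | [] => simp at hhead
  | a :: p1 =>
    simp only [List.head?_cons, Option.some.injEq] at hhead
    subst hhead
    match p1 with
    | [] => simp at hlen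
    | b :: p2 =>
      rw [List.Chain', List.isChain_cons_cons] at hchain
      obtain ⟨he1, hchain⟩ := hchain
      cases b <;> simp [cnfEdge] at he1
      case u i =>
      match p2 with
      | [] => simp [List.getLast?] at hlast
      | c :: p3 =>
        rw [List.isChain_cons_cons] at hchain
        obtain ⟨he2, hchain⟩ := hchain
        cases c <;> simp [cnfEdge] at he2
        case v i' =>
          subst he2
          match p3 with
          | [] => simp [List.getLast?] at hlast
          | d :: p4 =>
            rw [List.isChain_cons_cons] at hchain
            obtain ⟨he3, hchain⟩ := hchain
            cases d <;> simp [cnfEdge] at he3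
            case t j' =>
            match p4 with
            | [] =>
              simp [List.getLast?] at hlast
              subst hlast
              exact ⟨i, Or.inl ⟨rfl, he3⟩⟩
            | e :: p5 =>
              rw [List.isChain_cons_cons] at hchain
              obtain ⟨he4, _⟩ := hchain
              cases e <;> simp [cnfEdge] at he4
        case w i' =>
          subst he2
          match p3 with
          | [] => simp [List.getLast?] at hlast
          | d :: p4 =>
            rw [List.isChain_cons_cons] at hchain
            obtain ⟨he3, hchain⟩ := hchain
            cases d <;> simp [cnfEdge] at he3
            case t j' =>
            match p4 with
            | [] =>
              simp [List.getLast?] at hlast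
              subst hlast
              exact ⟨i, Or.inr ⟨rfl, he3⟩⟩
            | e :: p5 =>
              rw [List.isChain_cons_cons] at hchain
              obtain ⟨he4, _⟩ := hchain
              cases e <;> simp [cnfEdge] at he4

/-- If there is a rate assignment `ρ` on `G(Φ)` such that for every clause `j` the minimum
delay from `s j` to `t j` is at most `3`, then `Φ` is satisfiable; in fact, the truth
assignment setting variable `i` to True exactly when `ρ (u i, v i) = 1` satisfies every
clause of `Φ` (i.e. every clause contains a literal `(i, b)` with
`(ρ (u i) (v i) = 1) ↔ b = true`). -/
theorem rate_assignment_gives_satisfying_assignment {n m : ℕ}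
    (Φ : Fin m → Finset (Fin n × Bool))
    (hΦ : ∀ j, (Φ j).Nonempty ∧ (Φ j).card ≤ 3)
    (ρ : CNode n m → CNode n m → ℝ) (hρ : IsRateAssignment Φ ρ)
    (hdel : ∀ j : Fin m, minDelay Φ ρ (CNode.s j) (CNode.t j) ≤ 3) :
    (∃ σ : Fin n → Bool, ∀ j : Fin m, ∃ l ∈ Φ j, σ l.1 = l.2) ∧
    (∀ j : Fin m, ∃ l ∈ Φ j,
      (ρ (CNode.u l.1) (CNode.v l.1) = 1 ↔ l.2 = true)) := by
  have hbd := hρ.1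
  have hsum := hρ.2.2
  -- key lemma: one ≤ every edge delay
  have hone : ∀ a b : CNode n m, 1 ≤ edgeDelay ρ a b := by
    intro a b
    rw [edgeDelay, ENNReal.one_le_inv]
    exact ENNReal.ofReal_le_one.mpr (hbd a b).2
  -- edgeDelay ≤ 1 → ρ = 1
  have hrate1 : ∀ a b : CNode n m, edgeDelay ρ a b ≤ 1 → ρ a b = 1 := by
    intro a b hle
    rw [edgeDelay, ENNReal.inv_le_one, ENNReal.one_le_ofReal] at hle
    exact le_antisymm (hbd a b).2 hle
  -- if ρ (u i) (w i) = 1 then ρ (u i) (v i) = 0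
  have hexcl : ∀ i : Fin n, ρ (.u i) (.w i) = 1 → ρ (.u i) (.v i) = 0 := by
    intro i hw
    have hvw : (CNode.v i : CNode n m) ≠ .w i := by intro h; cases h
    have hsub : ({CNode.v i, CNode.w i} : Finset (CNode n m)) ⊆ Finset.univ :=
      Finset.subset_univ _
    have hle : ρ (.u i) (.v i) + ρ (.u i) (.w i) ≤ ∑ b : CNode n m, ρ (.u i) b := by
      rw [← Finset.sum_pair hvw]
      exact Finset.sum_le_sum_of_subset_of_nonneg hsub (fun b _ _ => (hbd _ b).1)
    have := le_trans hle (hsum (.u i))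
    rw [hw] at this
    nlinarith [(hbd (CNode.u i) (CNode.v i)).1]
  -- main: for each clause, a satisfied literal
  have key : ∀ j : Fin m, ∃ l ∈ Φ j,
      (ρ (CNode.u l.1) (CNode.v l.1) = 1 ↔ l.2 = true) := by
    intro j
    set S : Set ℝ≥0∞ :=
      {d : ℝ≥0∞ | ∃ p, IsDipath (cnfEdge Φ) (.s j) (.t j) p ∧ pathDelay ρ p = d} with hS
    have hinf : sInf S ≤ 3 := hdel j
    have hne : S.Nonempty := by
      by_contra hemp
      rw [Set.not_nonempty_iff_eq_empty] at hemp
      rw [hemp, sInf_empty] at hinf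
      exact absurd hinf (by simp)
    have hfin : S.Finite := by
      apply Set.Finite.subset (Set.finite_range
        (fun q : CNode n m × CNode n m =>
          edgeDelay ρ (.s j) q.1 + edgeDelay ρ q.1 q.2 + edgeDelay ρ q.2 (.t j)))
      rintro d ⟨p, hp, rfl⟩
      obtain ⟨i, hcase⟩ := dipath_struct Φ j p hp
      rcases hcase with ⟨rfl, -⟩ | ⟨rfl, -⟩
      · exact ⟨(.u i, .v i), by simp [pathDelay, edgeDelay, add_assoc]⟩
      · exact ⟨(.u i, .w i), by simp [pathDelay, edgeDelay, add_assoc]⟩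
    have hmem : sInf S ∈ S := Set.Nonempty.csInf_mem hne hfin
    obtain ⟨p, hp, hpd⟩ := hmem
    obtain ⟨i, hcase⟩ := dipath_struct Φ j p hp
    -- in either case, the path has three edges with delay sum ≤ 3
    have hmid : ∀ x : CNode n m,
        p = [.s j, .u i, x, .t j] → ρ (.u i) x = 1 := by
      intro x hpe
      subst hpe
      have hpd3 : edgeDelay ρ (.s j) (.u i) + edgeDelay ρ (.u i) x
          + edgeDelay ρ x (.t j) ≤ 3 := by
        have e : pathDelay ρ [CNode.s j, .u i, x, .t j]
            = edgeDelay ρ (.s j) (.u i) + edgeDelay ρ (.u i) x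
              + edgeDelay ρ x (.t j) := by
          simp [pathDelay, add_assoc]
        rw [← e, hpd]; exact hinf
      apply hrate1
      have h1 := hone (CNode.s j) (.u i)
      have h3 := hone x (CNode.t j)
      have : 1 + edgeDelay ρ (.u i) x + 1 ≤ 3 :=
        le_trans (by gcongr) hpd3
      calc edgeDelay ρ (.u i) x
          = (1 + edgeDelay ρ (.u i) x + 1) - 2 := by
            rw [add_comm 1 (edgeDelay ρ (.u i) x), add_assoc,
              (by norm_num : (1:ℝ≥0∞) + 1 = 2),
              ENNReal.add_sub_cancel_right (by norm_num : (2:ℝ≥0∞) ≠ ⊤)]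
        _ ≤ 3 - 2 := by gcongr
        _ = 1 := ENNReal.sub_eq_of_eq_add (by norm_num) (by norm_num)
    rcases hcase with ⟨hpe, hmemΦ⟩ | ⟨hpe, hmemΦ⟩
    · exact ⟨(i, true), hmemΦ, by simp [hmid _ hpe]⟩
    · refine ⟨(i, false), hmemΦ, ?_⟩
      have h0 := hexcl i (hmid _ hpe)
      simp [h0]
  refine ⟨⟨fun i => decide (ρ (.u i) (.v i) = 1), fun j => ?_⟩, key⟩
  obtain ⟨l, hl, hiff⟩ := key j
  refine ⟨l, hl, ?_⟩
  cases hb : l.2 <;> simp [hb] at hiff ⊢ <;> simp [hiff]
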